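/- If A is a Noetherian integrally closed domain, M is a reflexive A-module (i.e., the natural biduality map M → Hom_A(Hom_A(M,A),A) is an isomorphism), N is a torsion-free A-module, and ψ: M → N is an A-module homomorphism such that the localization ψ_p : M_p → N_p is an isomorphism for every prime ideal p of A of height at most one, then ψ is an isomorphism. -/

import Mathlib

open Ideal

theorem htbot {A : Type*} [CommRing A] [IsDomain A] :
    Order.height (⟨⊥, Ideal.bot_prime⟩ : PrimeSpectrum A) ≤ 1 := by
  have : Order.height (⟨⊥, Ideal.bot_prime⟩ : PrimeSpectrum A) = 0 := by
    rw [Order.height_eq_zero]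
    intro b _
    show (⊥ : Ideal A) ≤ b.asIdeal
    exact bot_le
  rw [this]; exact zero_le_one

theorem htone {A : Type*} [CommRing A] {p : Ideal A} (hp : p.IsPrime)
    (h : ∀ q₀ q₁ : Ideal A, q₀.IsPrime → q₁.IsPrime → q₀ < q₁ → q₁ < p → False) :
    Order.height (⟨p, hp⟩ : PrimeSpectrum A) ≤ 1 := by
  apply Order.height_le
  intro s hlast
  by_contra hlen
  push_neg at hlen
  have h2 : 2 ≤ s.length := by exact_mod_cast hlen
  have lt1 : s ⟨s.length - 2, by omega⟩ < s ⟨s.length - 1, by omega⟩ :=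
    s.strictMono (by simp only [Fin.lt_def]; omega)
  have lt2 : s ⟨s.length - 1, by omega⟩ < s ⟨s.length, by omega⟩ :=
    s.strictMono (by simp only [Fin.lt_def]; omega)
  have hl : s ⟨s.length, by omega⟩ = (⟨p, hp⟩ : PrimeSpectrum A) := by
    rw [← hlast]; rfl
  rw [hl] at lt2
  exact h _ _ (s ⟨s.length - 2, by omega⟩).2 (s ⟨s.length - 1, by omega⟩).2 lt1 lt2


-- In a Noetherian local domain whose maximal ideal is principal, every prime  strictly below max is ⊥
theorem prime_eq_bot {B : Type*} [CommRing B] [IsDomain B] [IsNoetherianRing B] [IsLocalRing B]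
    {g : B} (hg : IsLocalRing.maximalIdeal B = Ideal.span {g})
    {Q : Ideal B} (hQ : Q.IsPrime) (hlt : Q < IsLocalRing.maximalIdeal B) : Q = ⊥ := by
  have hgQ : g ∉ Q := by
    intro hgin
    have : IsLocalRing.maximalIdeal B ≤ Q := by
      rw [hg, Ideal.span_le, Set.singleton_subset_iff]; exact hgin
    exact absurd (lt_of_lt_of_le hlt this) (lt_irrefl _)
  have hle : Q ≤ IsLocalRing.maximalIdeal B • Q := by
    intro x hxQ
    have hxm : x ∈ Ideal.span {g} := hg ▸ (le_of_lt hlt) hxQ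
    obtain ⟨t, ht⟩ := Ideal.mem_span_singleton'.mp hxm
    have htQ : t ∈ Q := by
      have : t * g ∈ Q := ht ▸ hxQ
      exact (hQ.mem_or_mem this).resolve_right hgQ
    have hx2 : x = g * t := by rw [← ht, mul_comm]
    rw [Ideal.smul_eq_mul, hx2]
    exact Ideal.mul_mem_mul (by rw [hg]; exact Ideal.mem_span_singleton_self g) htQ
  exact Submodule.eq_bot_of_le_smul_of_le_jacobson_bot (IsLocalRing.maximalIdeal B) Q
    (IsNoetherian.noetherian Q) hle
    (by rw [IsLocalRing.jacobson_eq_maximalIdeal ⊥ bot_ne_top])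

theorem nochain {A : Type*} [CommRing A] [IsDomain A] [IsNoetherianRing A]
    {p : Ideal A} (hp : p.IsPrime)
    {g : Localization.AtPrime p}
    (hg : IsLocalRing.maximalIdeal (Localization.AtPrime p) = Ideal.span {g})
    {q₀ q₁ : Ideal A} (hq₀ : q₀.IsPrime) (hq₁ : q₁.IsPrime)
    (h01 : q₀ < q₁) (h1p : q₁ < p) : False := by
  set B := Localization.AtPrime p
  haveI : IsNoetherianRing B :=
    IsLocalization.isNoetherianRing p.primeCompl B inferInstance
  have hdisj : ∀ q : Ideal A, q ≤ p → Disjoint (p.primeCompl : Set A) (q : Set A) := by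
    intro q hqp
    rw [Set.disjoint_left]
    intro a ha haq
    exact ha (hqp haq)
  have key : ∀ q : Ideal A, q.IsPrime → q < p →
      (q.map (algebraMap A B)).IsPrime ∧ (q.map (algebraMap A B)).comap (algebraMap A B) = q ∧
      q.map (algebraMap A B) < IsLocalRing.maximalIdeal B := by
    intro q hq hlt
    have hd := hdisj q hlt.le
    refine ⟨IsLocalization.isPrime_of_isPrime_disjoint p.primeCompl B q hq hd,
      IsLocalization.comap_map_of_isPrime_disjoint p.primeCompl B hq hd, ?_⟩
    have hle : q.map (algebraMap A B) ≤ IsLocalRing.maximalIdeal B := by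
      rw [← Localization.AtPrime.map_eq_maximalIdeal]
      exact Ideal.map_mono hlt.le
    refine lt_of_le_of_ne hle ?_
    intro heq
    have := congrArg (Ideal.comap (algebraMap A B)) heq
    rw [(show (q.map (algebraMap A B)).comap (algebraMap A B) = q from
        IsLocalization.comap_map_of_isPrime_disjoint p.primeCompl B hq hd),
      (show (IsLocalRing.maximalIdeal B).comap (algebraMap A B) = p from
        Localization.AtPrime.comap_maximalIdeal)] at this
    exact (ne_of_lt hlt) this
  obtain ⟨hQ₀p, hQ₀c, hQ₀lt⟩ := key q₀ hq₀ (h01.trans h1p)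
  obtain ⟨hQ₁p, hQ₁c, hQ₁lt⟩ := key q₁ hq₁ h1p
  have e₁ : q₁.map (algebraMap A B) = ⊥ := prime_eq_bot hg hQ₁p hQ₁lt
  have e₀ : q₀.map (algebraMap A B) < q₁.map (algebraMap A B) := by
    refine lt_of_le_of_ne (Ideal.map_mono h01.le) ?_
    intro heq
    have := congrArg (Ideal.comap (algebraMap A B)) heq
    rw [hQ₀c, hQ₁c] at this
    exact (ne_of_lt h01) this
  rw [e₁] at e₀
  exact (not_lt_bot e₀)

theorem keylemma {A : Type*} [CommRing A] [IsDomain A] [IsNoetherianRing A]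
    [IsIntegrallyClosed A] {x y : A} (hy : y ≠ 0)
    (H : ∀ (p : Ideal A) (hp : p.IsPrime),
      Order.height (⟨p, hp⟩ : PrimeSpectrum A) ≤ 1 →
      ∃ a, a ∈ (Ideal.span {y}).colon (Ideal.span {x}) ∧ a ∉ p) :
    y ∣ x := by
  by_contra hx
  have hxny : x ∉ Ideal.span {y} := fun h => hx (Ideal.mem_span_singleton.mp h)
  set S : Set (Ideal A) :=
    {J | ∃ w, w * x ∉ Ideal.span {y} ∧ J = (Ideal.span {y}).colon (Ideal.span {w * x})} with hS
  have hne : S.Nonempty := ⟨(Ideal.span {y}).colon (Ideal.span {x}), 1,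
    by simpa using hxny, by rw [one_mul]⟩
  obtain ⟨p, hpS, hmax⟩ :=
    (set_has_maximal_iff_noetherian.mpr (inferInstance : IsNoetherianRing A)) S hne
  obtain ⟨w, hwx, hpdef⟩ := hpS
  set z := w * x with hzdef
  -- membership criterion
  have hmem : ∀ b : A, b ∈ p ↔ b * z ∈ Ideal.span {y} := by
    intro b; rw [hpdef]; exact Ideal.mem_colon_span_singleton
  have hJ0 : (Ideal.span {y}).colon (Ideal.span {x}) ≤ p := by
    intro b hb
    rw [hmem]
    have : b * x ∈ Ideal.span {y} := Ideal.mem_colon_span_singleton.mp hb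
    have : w * (b * x) ∈ Ideal.span {y} := Ideal.mul_mem_left _ _ this
    have heq : b * z = w * (b * x) := by ring
    rw [heq]; exact this
  have hmaxle : ∀ I ∈ S, p ≤ I → I = p := by
    intro I hI hle
    rcases eq_or_lt_of_le hle with h | h
    · exact h.symm
    · exact absurd h (hmax I hI)
  have hpprime : Ideal.IsPrime p := by
    constructor
    · intro htop
      have : (1 : A) ∈ p := htop ▸ Submodule.mem_top
      rw [hmem, one_mul] at this
      exact hwx this
    · intro a b hab
      by_cases hap : a ∈ p
      · exact Or.inl hap
      · right
        have haz : (a * w) * x ∉ Ideal.span {y} := by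
          intro h
          apply hap
          rw [hmem]
          have : a * z = (a * w) * x := by rw [hzdef]; ring
          rw [this]; exact h
        have hSmem : (Ideal.span {y}).colon (Ideal.span {(a * w) * x}) ∈ S := ⟨a * w, haz, rfl⟩
        have hple : p ≤ (Ideal.span {y}).colon (Ideal.span {(a * w) * x}) := by
          intro c hc
          rw [Ideal.mem_colon_span_singleton]
          have : c * z ∈ Ideal.span {y} := (hmem c).mp hc
          have h2 : c * ((a * w) * x) = a * (c * z) := by rw [hzdef]; ring
          rw [h2]; exact Ideal.mul_mem_left _ _ this
        have heqp := hmaxle _ hSmem hple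
        have hb : b ∈ (Ideal.span {y}).colon (Ideal.span {(a * w) * x}) := by
          rw [Ideal.mem_colon_span_singleton]
          have h3 : b * ((a * w) * x) = (a * b) * z := by rw [hzdef]; ring
          rw [h3]
          exact (hmem _).mp hab
        rw [heqp] at hb
        exact hb
  have hyp : y ∈ p := by
    rw [hmem]
    exact Ideal.mul_mem_right _ _ (Ideal.mem_span_singleton_self y)
  have hdiv : ∀ a ∈ p, ∃ c, a * z = y * c := by
    intro a ha
    obtain ⟨t, ht⟩ := Ideal.mem_span_singleton'.mp ((hmem a).mp ha)
    exact ⟨t, by rw [← ht]; ring⟩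
  choose! qf hqf using hdiv
  have hht : Order.height (⟨p, hpprime⟩ : PrimeSpectrum A) ≤ 1 := by
    by_cases hcase : ∀ a, a ∈ p → qf a ∈ p
    · -- impossible case: z/y would be integral over A, hence in A
      exfalso
      set K := FractionRing A
      have hy' : algebraMap A K y ≠ 0 := fun h => hy (IsFractionRing.injective A K (by rw [h, map_zero]))
      set k : K := algebraMap A K z / algebraMap A K y with hk
      have hyk : algebraMap A K y * k = algebraMap A K z := mul_div_cancel₀ _ hy'
      set N : Submodule A K := Submodule.map (Algebra.linearMap A K) p with hN
      have hNne : N ≠ ⊥ := by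
        intro hbot
        have : algebraMap A K y ∈ N := ⟨y, hyp, rfl⟩
        rw [hbot, Submodule.mem_bot] at this
        exact hy' this
      have hNfg : N.FG := (IsNoetherian.noetherian p).map _
      have hstab : ∀ n ∈ N, k • n ∈ N := by
        rintro n ⟨a, ha, rfl⟩
        refine ⟨qf a, hcase a ha, ?_⟩
        have : algebraMap A K y * (k * algebraMap A K a) = algebraMap A K y * algebraMap A K (qf a) := by
          rw [← mul_assoc, hyk, ← _root_.map_mul, ← _root_.map_mul, mul_comm z a, hqf a ha]
        have h2 := mul_left_cancel₀ hy' this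
        simpa [Algebra.smul_def] using h2.symm
      have hint : IsIntegral A k := isIntegral_of_smul_mem_submodule N hNne hNfg k hstab
      obtain ⟨c, hc⟩ := IsIntegrallyClosed.isIntegral_iff.mp hint
      apply hwx
      rw [Ideal.mem_span_singleton]
      refine ⟨c, IsFractionRing.injective A K ?_⟩
      have hfin : algebraMap A K (y * c) = algebraMap A K z := by
        rw [_root_.map_mul (algebraMap A K) y c, hc, hyk]
      exact hfin.symm
    · push_neg at hcase
      obtain ⟨a, ha, hcnp⟩ := hcase
      set B := Localization.AtPrime p
      have hg : IsLocalRing.maximalIdeal B = Ideal.span {algebraMap A B a} := by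
        rw [← Localization.AtPrime.map_eq_maximalIdeal]
        apply le_antisymm
        · rw [Ideal.map_le_iff_le_comap]
          intro b hb
          show algebraMap A B b ∈ Ideal.span {algebraMap A B a}
          have hbc : b * qf a = a * qf b := by
            have h1 : y * (b * qf a) = y * (a * qf b) := by
              calc y * (b * qf a) = b * (y * qf a) := by ring
                _ = b * (a * z) := by rw [hqf a ha]
                _ = a * (b * z) := by ring
                _ = a * (y * qf b) := by rw [hqf b hb]
                _ = y * (a * qf b) := by ring
            exact mul_left_cancel₀ hy h1
          have hu : IsUnit (algebraMap A B (qf a)) := IsLocalization.map_units (M := Ideal.primeCompl p) B ⟨qf a, hcnp⟩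
          obtain ⟨v, hv⟩ := hu.exists_right_inv
          rw [Ideal.mem_span_singleton]
          refine ⟨algebraMap A B (qf b) * v, ?_⟩
          have hcne : algebraMap A B (qf a) ≠ 0 := hu.ne_zero
          apply mul_right_cancel₀ hcne
          calc algebraMap A B b * algebraMap A B (qf a) = algebraMap A B (b * qf a) := by rw [_root_.map_mul]
            _ = algebraMap A B (a * qf b) := by rw [hbc]
            _ = algebraMap A B a * algebraMap A B (qf b) := by rw [_root_.map_mul]
            _ = algebraMap A B a * (algebraMap A B (qf b) * v) * algebraMap A B (qf a) := by
                rw [mul_assoc, mul_assoc, mul_comm v (algebraMap A B (qf a)), hv, mul_one]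
        · rw [Ideal.span_le, Set.singleton_subset_iff]
          exact Ideal.mem_map_of_mem _ ha
      exact htone hpprime (fun q₀ q₁ h0 h1 h01 h1p => nochain hpprime hg h0 h1 h01 h1p)
  obtain ⟨a, haJ, hap⟩ := H p hpprime hht
  exact hap (hJ0 haJ)


/-- Auslander–Buchsbaum: if `A` is a Noetherian integrally closed domain, `M` a reflexive
`A`-module, `N` a torsion-free `A`-module, and `ψ : M → N` localizes to an isomorphism at
every prime of height at most one, then `ψ` is an isomorphism. -/
theorem reflexive_map_bijective_of_localization_bijective
    {A : Type*} [CommRing A] [IsDomain A] [IsNoetherianRing A] [IsIntegrallyClosed A]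
    {M N : Type*} [AddCommGroup M] [Module A M] [AddCommGroup N] [Module A N]
    [Module.IsReflexive A M] [NoZeroSMulDivisors A N]
    (ψ : M →ₗ[A] N)
    (hloc : ∀ (p : Ideal A) [p.IsPrime],
      Order.height (⟨p, ‹_›⟩ : PrimeSpectrum A) ≤ 1 →
      Function.Bijective (LocalizedModule.map p.primeCompl ψ)) :
    Function.Bijective ψ := by
  -- M is torsion-free
  have hMtf : ∀ (a : A) (m : M), a ≠ 0 → a • m = 0 → m = 0 := by
    intro a m ha h0
    have h1 : Module.Dual.eval A M m = 0 := by
      ext f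
      have : a * f m = 0 := by rw [← smul_eq_mul, ← map_smul, h0, map_zero]
      simpa using (mul_eq_zero.mp this).resolve_left ha
    have := (Module.bijective_dual_eval A M).injective
      (a₁ := m) (a₂ := 0) (by rw [h1, map_zero])
    exact this
  -- injectivity of ψ
  have hinjm : ∀ m : M, ψ m = 0 → m = 0 := by
    intro m hm
    haveI : (⊥ : Ideal A).IsPrime := Ideal.bot_prime
    have hb := (hloc ⊥ htbot).injective
    have h1 : (LocalizedModule.map (⊥ : Ideal A).primeCompl ψ) (LocalizedModule.mk m 1) =
        (LocalizedModule.map (⊥ : Ideal A).primeCompl ψ) (LocalizedModule.mk 0 1) := by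
      rw [LocalizedModule.map_mk, LocalizedModule.map_mk, hm, map_zero]
    have h2 := hb h1
    obtain ⟨u, hu⟩ := LocalizedModule.mk_eq.mp h2
    simp only [one_smul, smul_zero] at hu
    have hune : (u : A) ≠ 0 := fun h => u.2 (Ideal.mem_bot.mpr h)
    refine hMtf u m hune ?_
    simpa only [Submonoid.smul_def] using hu
  have hinj : Function.Injective ψ := by
    intro m₁ m₂ h
    have := hinjm (m₁ - m₂) (by rw [map_sub, h, sub_self])
    exact sub_eq_zero.mp this
  refine ⟨hinj, ?_⟩
  intro n
  -- the ideal of multipliers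
  let I : Ideal A :=
    { carrier := {a | ∃ m, ψ m = a • n}
      add_mem' := by
        rintro a b ⟨ma, hma⟩ ⟨mb, hmb⟩
        exact ⟨ma + mb, by rw [map_add, hma, hmb, add_smul]⟩
      zero_mem' := ⟨0, by rw [map_zero, zero_smul]⟩
      smul_mem' := by
        rintro c a ⟨ma, hma⟩
        exact ⟨c • ma, by rw [map_smul, hma, smul_assoc]⟩ }
  have hI : ∀ (p : Ideal A) (hp : p.IsPrime),
      Order.height (⟨p, hp⟩ : PrimeSpectrum A) ≤ 1 → ∃ a, a ∈ I ∧ a ∉ p := by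
    intro p hp hht
    obtain ⟨u, hu⟩ := (hloc p hht).surjective (LocalizedModule.mk n 1)
    obtain ⟨m, s, hms⟩ : ∃ (m : M) (s : p.primeCompl),
        (LocalizedModule.map p.primeCompl ψ) (LocalizedModule.mk m s) = LocalizedModule.mk n 1 := by
      revert hu
      induction u using LocalizedModule.induction_on with
      | h m s => exact fun hu => ⟨m, s, hu⟩
    rw [LocalizedModule.map_mk] at hms
    obtain ⟨c, hc⟩ := LocalizedModule.mk_eq.mp hms
    refine ⟨(c : A) * (s : A), ⟨(c : A) • m, ?_⟩, fun h => (c * s).2 h⟩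
    rw [map_smul, mul_smul]
    rw [one_smul] at hc
    simp only [Submonoid.smul_def] at hc
    exact hc
  have hbotI : ∃ a₀, a₀ ∈ I ∧ a₀ ≠ 0 := by
    haveI : (⊥ : Ideal A).IsPrime := Ideal.bot_prime
    obtain ⟨a₀, ha₀, hnp⟩ := hI ⊥ Ideal.bot_prime htbot
    exact ⟨a₀, ha₀, fun h => hnp (Ideal.mem_bot.mpr h)⟩
  obtain ⟨a₀, ha₀I, ha₀ne⟩ := hbotI
  have hch : ∀ a ∈ I, ∃ m, ψ m = a • n := fun a ha => ha
  choose! mfun hmfun using hch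
  have hco : ∀ a ∈ I, ∀ b ∈ I, b • mfun a = a • mfun b := by
    intro a ha b hb
    apply hinj
    rw [map_smul, map_smul, hmfun a ha, hmfun b hb, smul_smul, smul_smul, mul_comm]
  -- divisibility of f (mfun a₀)
  have hdvd : ∀ f : Module.Dual A M, a₀ ∣ f (mfun a₀) := by
    intro f
    apply keylemma ha₀ne
    intro p hp hht
    obtain ⟨a, haI, hanp⟩ := hI p hp hht
    refine ⟨a, ?_, hanp⟩
    rw [Ideal.mem_colon_span_singleton]
    rw [Ideal.mem_span_singleton]
    refine ⟨f (mfun a), ?_⟩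
    rw [← smul_eq_mul, ← smul_eq_mul, ← map_smul, ← map_smul, hco a₀ ha₀I a haI]
  choose cf hcf using hdvd
  have hcf' : ∀ f : Module.Dual A M, a₀ * cf f = f (mfun a₀) := fun f => (hcf f).symm
  have hadd : ∀ f g : Module.Dual A M, cf (f + g) = cf f + cf g := by
    intro f g
    apply mul_left_cancel₀ ha₀ne
    rw [hcf', mul_add, hcf', hcf', LinearMap.add_apply]
  have hsmul : ∀ (r : A) (f : Module.Dual A M), cf (r • f) = r * cf f := by
    intro r f
    apply mul_left_cancel₀ ha₀ne
    rw [hcf', LinearMap.smul_apply, smul_eq_mul, ← hcf' f]; ring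
  let φ : Module.Dual A (Module.Dual A M) :=
    { toFun := cf
      map_add' := hadd
      map_smul' := fun r f => by simpa using hsmul r f }
  obtain ⟨m₀, hm₀⟩ := (Module.bijective_dual_eval A M).surjective φ
  have hev : ∀ f : Module.Dual A M, f m₀ = cf f := fun f => LinearMap.congr_fun hm₀ f
  have hkey : a₀ • m₀ = mfun a₀ := by
    apply (Module.bijective_dual_eval A M).injective
    ext f
    show f (a₀ • m₀) = f (mfun a₀)
    rw [map_smul, smul_eq_mul, hev f, hcf' f]
  refine ⟨m₀, ?_⟩
  have h1 : a₀ • ψ m₀ = a₀ • n := by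
    rw [← map_smul, hkey, hmfun a₀ ha₀I]
  exact smul_right_injective N ha₀ne h1
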